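/- Let X = {p} be a single point in P² with u = (1,2,3). Then the distortion variety X_{[u]} is a rational curve in P⁸, and if the last coordinate c of p is nonzero, then X_{[u]} has degree 3 (it is a rational normal cubic curve in a P³). -/

import Mathlib

set_option maxRecDepth 100000
set_option maxHeartbeats 1000000


open MvPolynomial

/-- The distortion vector `u = (1, 2, 3)` on `ℙ²`. -/
def u123 : Fin 3 → ℕ := ![1, 2, 3]

/-- Index type for the `9` coordinates of `ℙ⁸`. -/
abbrev DIdx := (j : Fin 3) × Fin (u123 j + 1)

/-- The distortion map `(a,b,c,λ) ↦ (a : aλ : b : bλ : bλ² : c : cλ : cλ² : cλ³)`. -/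
def distMap : (Fin 3 → ℂ) → ℂ → (DIdx → ℂ) :=
  fun x lam c => x c.1 * lam ^ (c.2 : ℕ)

/-- The Zariski closure of a subset of affine space. -/
def zClosure {σ : Type*} (S : Set (σ → ℂ)) : Set (σ → ℂ) :=
  {z | ∀ Q : MvPolynomial σ ℂ, (∀ w ∈ S, eval w Q = 0) → eval z Q = 0}

/-- `hasDegree m V k` : the affine cone `V` over a projective variety of dimension `m`
has degree `k` (generic linear sections, with one affine normalization, meet `V` in
exactly `k` points). -/
def hasDegree {σ : Type*} [Fintype σ] (m : ℕ) (V : Set (σ → ℂ)) (k : ℕ) : Prop :=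
  ∃ G : MvPolynomial (Fin (m + 1) × σ) ℂ, G ≠ 0 ∧
    ∀ α : Fin (m + 1) → σ → ℂ,
      eval (fun q => α q.1 q.2) G ≠ 0 →
      Set.ncard {z | z ∈ V ∧ (∑ c, α 0 c * z c) = 1 ∧
        ∀ i : Fin (m + 1), i ≠ 0 → (∑ c, α i c * z c) = 0} = k

/-- The affine cone over the distortion variety `X_{[u]} ⊂ ℙ⁸` of the single point
`X = {(a₀ : b₀ : c₀)} ⊂ ℙ²`: the closure of all scalar multiples of the curve
`λ ↦ (a₀ : a₀λ : b₀ : b₀λ : b₀λ² : c₀ : c₀λ : c₀λ² : c₀λ³)`. -/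
def ptDist (p : Fin 3 → ℂ) : Set (DIdx → ℂ) :=
  zClosure {w | ∃ t lam : ℂ, w = t • distMap p lam}

/-! ### Auxiliary material -/

lemma sum_DIdx (f : DIdx → ℂ) : ∑ d, f d = f ⟨0,0⟩ + f ⟨0,1⟩ + f ⟨1,0⟩ + f ⟨1,1⟩ + f ⟨1,2⟩
    + f ⟨2,0⟩ + f ⟨2,1⟩ + f ⟨2,2⟩ + f ⟨2,3⟩ := by
  have h : ∑ d, f d = f ⟨0,0⟩ + (f ⟨0,1⟩ + (f ⟨1,0⟩ + (f ⟨1,1⟩ + (f ⟨1,2⟩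
    + (f ⟨2,0⟩ + (f ⟨2,1⟩ + (f ⟨2,2⟩ + (f ⟨2,3⟩ + 0)))))))) := rfl
  rw [h]; ring

lemma DIdx_cases (d : DIdx) : d = ⟨0,0⟩ ∨ d = ⟨0,1⟩ ∨ d = ⟨1,0⟩ ∨ d = ⟨1,1⟩ ∨ d = ⟨1,2⟩
    ∨ d = ⟨2,0⟩ ∨ d = ⟨2,1⟩ ∨ d = ⟨2,2⟩ ∨ d = ⟨2,3⟩ := by revert d; decide

lemma cva0 : ((0 : Fin (u123 0 + 1)) : ℕ) = 0 := rfl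
lemma cva1 : ((1 : Fin (u123 0 + 1)) : ℕ) = 1 := rfl
lemma cvb0 : ((0 : Fin (u123 1 + 1)) : ℕ) = 0 := rfl
lemma cvb1 : ((1 : Fin (u123 1 + 1)) : ℕ) = 1 := rfl
lemma cvb2 : ((2 : Fin (u123 1 + 1)) : ℕ) = 2 := rfl
lemma cvc0 : ((0 : Fin (u123 2 + 1)) : ℕ) = 0 := rfl
lemma cvc1 : ((1 : Fin (u123 2 + 1)) : ℕ) = 1 := rfl
lemma cvc2 : ((2 : Fin (u123 2 + 1)) : ℕ) = 2 := rfl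
lemma cvc3 : ((3 : Fin (u123 2 + 1)) : ℕ) = 3 := rfl

lemma mem_ptDist (p : Fin 3 → ℂ) (t lam : ℂ) : t • distMap p lam ∈ ptDist p :=
  fun _Q h => h _ ⟨t, lam, rfl⟩

lemma ptDist_rel (p : Fin 3 → ℂ) {z : DIdx → ℂ} (hz : z ∈ ptDist p) (d e : DIdx)
    (hde : (d.2 : ℕ) = (e.2 : ℕ)) (he : e.1 = 2) :
    p 2 * z d = p d.1 * z e := by
  have h := hz (C (p 2) * X d - C (p d.1) * X e) ?_
  · simp only [map_sub, map_mul, eval_C, eval_X, sub_eq_zero] at h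
    exact h
  · rintro w ⟨t, lam, rfl⟩
    obtain ⟨dj, di⟩ := d
    obtain ⟨ej, ei⟩ := e
    simp only [map_sub, map_mul, eval_C, eval_X, Pi.smul_apply, smul_eq_mul, distMap] at *
    subst he
    rw [hde]
    ring

lemma ptDist_quad (p : Fin 3 → ℂ) {z : DIdx → ℂ} (hz : z ∈ ptDist p)
    (i1 i2 j1 j2 : Fin (u123 2 + 1)) (hsum : (i1 : ℕ) + (i2 : ℕ) = (j1 : ℕ) + (j2 : ℕ)) :
    z ⟨2, i1⟩ * z ⟨2, i2⟩ = z ⟨2, j1⟩ * z ⟨2, j2⟩ := by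
  have h := hz (X (R := ℂ) ⟨2, i1⟩ * X ⟨2, i2⟩ - X ⟨2, j1⟩ * X ⟨2, j2⟩) ?_
  · simp only [map_sub, map_mul, eval_X, sub_eq_zero] at h
    exact h
  · rintro w ⟨t, lam, rfl⟩
    simp only [map_sub, map_mul, eval_X, Pi.smul_apply, smul_eq_mul, distMap]
    have hl : lam ^ ((i1 : ℕ) + (i2 : ℕ)) = lam ^ ((j1 : ℕ) + (j2 : ℕ)) := by rw [hsum]
    linear_combination t ^ 2 * p 2 ^ 2 * hl

lemma ptDist_cases (p : Fin 3 → ℂ) (hp : p 2 ≠ 0) {z : DIdx → ℂ} (hz : z ∈ ptDist p) :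
    (∃ t lam : ℂ, z = t • distMap p lam) ∨ (∀ d : DIdx, d ≠ ⟨2, 3⟩ → z d = 0) := by
  have q1 : z ⟨2,0⟩ * z ⟨2,2⟩ = z ⟨2,1⟩ * z ⟨2,1⟩ := ptDist_quad p hz 0 2 1 1 rfl
  have q2 : z ⟨2,0⟩ * z ⟨2,3⟩ = z ⟨2,1⟩ * z ⟨2,2⟩ := ptDist_quad p hz 0 3 1 2 rfl
  have q3 : z ⟨2,1⟩ * z ⟨2,3⟩ = z ⟨2,2⟩ * z ⟨2,2⟩ := ptDist_quad p hz 1 3 2 2 rfl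
  have r00 : p 2 * z ⟨0,0⟩ = p 0 * z ⟨2,0⟩ := ptDist_rel p hz ⟨0,0⟩ ⟨2,0⟩ rfl rfl
  have r01 : p 2 * z ⟨0,1⟩ = p 0 * z ⟨2,1⟩ := ptDist_rel p hz ⟨0,1⟩ ⟨2,1⟩ rfl rfl
  have r10 : p 2 * z ⟨1,0⟩ = p 1 * z ⟨2,0⟩ := ptDist_rel p hz ⟨1,0⟩ ⟨2,0⟩ rfl rfl
  have r11 : p 2 * z ⟨1,1⟩ = p 1 * z ⟨2,1⟩ := ptDist_rel p hz ⟨1,1⟩ ⟨2,1⟩ rfl rfl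
  have r12 : p 2 * z ⟨1,2⟩ = p 1 * z ⟨2,2⟩ := ptDist_rel p hz ⟨1,2⟩ ⟨2,2⟩ rfl rfl
  by_cases h0 : z ⟨2,0⟩ = 0
  · right
    have h1 : z ⟨2,1⟩ = 0 := mul_self_eq_zero.mp (by rw [← q1, h0, zero_mul])
    have h2 : z ⟨2,2⟩ = 0 := mul_self_eq_zero.mp (by rw [← q3, h1, zero_mul])
    intro d hd
    rcases DIdx_cases d with rfl|rfl|rfl|rfl|rfl|rfl|rfl|rfl|rfl
    · have := r00; rw [h0, mul_zero] at this; exact (mul_eq_zero.mp this).resolve_left hp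
    · have := r01; rw [h1, mul_zero] at this; exact (mul_eq_zero.mp this).resolve_left hp
    · have := r10; rw [h0, mul_zero] at this; exact (mul_eq_zero.mp this).resolve_left hp
    · have := r11; rw [h1, mul_zero] at this; exact (mul_eq_zero.mp this).resolve_left hp
    · have := r12; rw [h2, mul_zero] at this; exact (mul_eq_zero.mp this).resolve_left hp
    · exact h0
    · exact h1
    · exact h2
    · exact absurd rfl hd
  · left
    refine ⟨z ⟨2,0⟩ / p 2, z ⟨2,1⟩ / z ⟨2,0⟩, ?_⟩
    funext d
    rcases DIdx_cases d with rfl|rfl|rfl|rfl|rfl|rfl|rfl|rfl|rfl <;>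
      simp only [Pi.smul_apply, smul_eq_mul, distMap,
        cva0, cva1, cvb0, cvb1, cvb2, cvc0, cvc1, cvc2, cvc3]
    · field_simp; linear_combination r00
    · field_simp; linear_combination r01
    · field_simp; linear_combination r10
    · field_simp; linear_combination r11
    · field_simp; linear_combination z ⟨2,0⟩ * r12 + p 1 * q1
    · field_simp
    · field_simp
    · field_simp; linear_combination q1
    · field_simp; linear_combination z ⟨2,0⟩ * q2 + z ⟨2,1⟩ * q1

/-- The value at `lam` of the cubic with coefficients `b 0, …, b 3`. -/
def fev (b : ℕ → ℂ) (lam : ℂ) : ℂ := b 3 * lam ^ 3 + b 2 * lam ^ 2 + b 1 * lam + b 0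

/-- The (formal degree `3`) Sylvester matrix of two cubics. -/
def syl {R : Type*} [CommRing R] (b g : ℕ → R) : Matrix (Fin 6) (Fin 6) R :=
  !![b 3, b 2, b 1, b 0, 0, 0;
     0, b 3, b 2, b 1, b 0, 0;
     0, 0, b 3, b 2, b 1, b 0;
     g 3, g 2, g 1, g 0, 0, 0;
     0, g 3, g 2, g 1, g 0, 0;
     0, 0, g 3, g 2, g 1, g 0]

lemma cons_val_five' {α : Type*} (a b c d e f : α) : ![a,b,c,d,e,f] 5 = f := rfl

lemma syl_det_zero (b g : ℕ → ℂ) (lam : ℂ) (hb : fev b lam = 0) (hg : fev g lam = 0) :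
    (syl b g).det = 0 := by
  simp only [fev] at hb hg
  by_contra h
  have hv : (syl b g).mulVec ![lam^5, lam^4, lam^3, lam^2, lam, 1] = 0 := by
    show (Matrix.of _).mulVec _ = _
    simp only [syl, Matrix.cons_mulVec, Matrix.cons_dotProduct, Matrix.dotProduct_of_isEmpty,
      Matrix.empty_mulVec, Matrix.head_cons, Matrix.tail_cons]
    rw [show (0 : Fin 6 → ℂ) = ![0,0,0,0,0,0] by funext i; fin_cases i <;> rfl]
    refine congrArg₂ Matrix.vecCons ?_ (congrArg₂ Matrix.vecCons ?_ (congrArg₂ Matrix.vecCons ?_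
      (congrArg₂ Matrix.vecCons ?_ (congrArg₂ Matrix.vecCons ?_ (congrArg₂ Matrix.vecCons ?_ rfl)))))
    · linear_combination lam ^ 2 * hb
    · linear_combination lam * hb
    · linear_combination hb
    · linear_combination lam ^ 2 * hg
    · linear_combination lam * hg
    · linear_combination hg
  have h0 := Matrix.eq_zero_of_mulVec_eq_zero h hv
  have h5 := congrFun h0 5
  rw [cons_val_five'] at h5
  exact one_ne_zero h5

/-- Coefficients of the cubic `λ ↦ ∑ d, a d * distMap p λ d`. -/
def coefB (p : Fin 3 → ℂ) (a : DIdx → ℂ) : ℕ → ℂ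
  | 0 => a ⟨0,0⟩ * p 0 + a ⟨1,0⟩ * p 1 + a ⟨2,0⟩ * p 2
  | 1 => a ⟨0,1⟩ * p 0 + a ⟨1,1⟩ * p 1 + a ⟨2,1⟩ * p 2
  | 2 => a ⟨1,2⟩ * p 1 + a ⟨2,2⟩ * p 2
  | 3 => a ⟨2,3⟩ * p 2
  | _ => 0

/-- The same coefficients as linear polynomials in the coefficients of the linear sections. -/
noncomputable def linB (p : Fin 3 → ℂ) (m : Fin 2) : ℕ → MvPolynomial (Fin 2 × DIdx) ℂ
  | 0 => X (m, ⟨0,0⟩) * C (p 0) + X (m, ⟨1,0⟩) * C (p 1) + X (m, ⟨2,0⟩) * C (p 2)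
  | 1 => X (m, ⟨0,1⟩) * C (p 0) + X (m, ⟨1,1⟩) * C (p 1) + X (m, ⟨2,1⟩) * C (p 2)
  | 2 => X (m, ⟨1,2⟩) * C (p 1) + X (m, ⟨2,2⟩) * C (p 2)
  | 3 => X (m, ⟨2,3⟩) * C (p 2)
  | _ => 0

lemma eval_linB (p : Fin 3 → ℂ) (α : Fin 2 → DIdx → ℂ) (m : Fin 2) (i : ℕ) :
    eval (fun q : Fin 2 × DIdx => α q.1 q.2) (linB p m i) = coefB p (α m) i := by
  match i with
  | 0 => simp [linB, coefB]
  | 1 => simp [linB, coefB]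
  | 2 => simp [linB, coefB]
  | 3 => simp [linB, coefB]
  | (n+4) => simp [linB, coefB]

lemma sum_linear (p : Fin 3 → ℂ) (a : DIdx → ℂ) (t lam : ℂ) :
    ∑ d, a d * (t • distMap p lam) d = t * fev (coefB p a) lam := by
  rw [sum_DIdx]
  simp only [Pi.smul_apply, smul_eq_mul, distMap, coefB, fev,
    cva0, cva1, cvb0, cvb1, cvb2, cvc0, cvc1, cvc2, cvc3]
  ring

lemma f65 : (5 : Fin 6) = Fin.succ 4 := rfl
lemma f54 : (4 : Fin 5) = Fin.succ 3 := rfl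
lemma f43 : (3 : Fin 4) = Fin.succ 2 := rfl
lemma f32 : (2 : Fin 3) = Fin.succ 1 := rfl
lemma f21 : (1 : Fin 2) = Fin.succ 0 := rfl

/-- A "genericity certificate" polynomial: leading coefficient times discriminant times
resultant. -/
noncomputable def Gpoly (p : Fin 3 → ℂ) : MvPolynomial (Fin 2 × DIdx) ℂ :=
  X (1, (⟨2,3⟩ : DIdx)) * Cubic.discr ⟨linB p 1 3, linB p 1 2, linB p 1 1, linB p 1 0⟩
    * (syl (linB p 1) (linB p 0)).det

lemma eval_Gpoly (p : Fin 3 → ℂ) (α : Fin 2 → DIdx → ℂ) :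
    eval (fun q : Fin 2 × DIdx => α q.1 q.2) (Gpoly p) =
      α 1 ⟨2,3⟩ *
        Cubic.discr ⟨coefB p (α 1) 3, coefB p (α 1) 2, coefB p (α 1) 1, coefB p (α 1) 0⟩ *
        (syl (coefB p (α 1)) (coefB p (α 0))).det := by
  have hdet : eval (fun q : Fin 2 × DIdx => α q.1 q.2) ((syl (linB p 1) (linB p 0)).det)
      = (syl (coefB p (α 1)) (coefB p (α 0))).det := by
    rw [RingHom.map_det]
    congr 1
    ext i j
    fin_cases i <;> fin_cases j <;>
      simp [syl, eval_linB, Matrix.map_apply, f65, f54, f43, f32, f21, Matrix.cons_val_succ,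
        Matrix.vecHead, Matrix.vecTail]
  simp only [Gpoly, map_mul, eval_X, hdet, Cubic.discr, map_sub, map_add, map_pow, map_ofNat,
    eval_linB]

lemma u2 : u123 2 = 3 := rfl
lemma u1 : u123 1 = 2 := rfl
lemma u0 : u123 0 = 1 := rfl
lemma fne : (3 : Fin (u123 2 + 1)) ≠ 0 ∧ (2 : Fin (u123 2 + 1)) ≠ 0 ∧ (1 : Fin (u123 2 + 1)) ≠ 0 ∧
    (2 : Fin (u123 1 + 1)) ≠ 0 ∧ (1 : Fin (u123 1 + 1)) ≠ 0 ∧ (1 : Fin (u123 0 + 1)) ≠ 0 := by decide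

set_option maxRecDepth 10000 in
lemma Gpoly_ne_zero (p : Fin 3 → ℂ) (hp : p 2 ≠ 0) : Gpoly p ≠ 0 := by
  intro h
  classical
  set A : Fin 2 → DIdx → ℂ := fun m d =>
    if m = 1 then (if (d.1 : ℕ) = 2 ∧ (d.2 : ℕ) = 0 then -1 else if (d.2 : ℕ) = 3 then 1 else 0)
    else (if (d.1 : ℕ) = 2 ∧ (d.2 : ℕ) = 0 then 1 else 0) with hA
  have h0 := congrArg (eval fun q : Fin 2 × DIdx => A q.1 q.2) h
  rw [eval_Gpoly, map_zero] at h0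
  have e1 : A 1 ⟨2,3⟩ = 1 := by norm_num [hA, u0, u1, u2, fne, cva0, cva1, cvb0, cvb1, cvb2, cvc0, cvc1, cvc2, cvc3]
  have eb0 : coefB p (A 1) 0 = -p 2 := by
    norm_num [hA, u0, u1, u2, fne, coefB, cva0, cva1, cvb0, cvb1, cvb2, cvc0, cvc1, cvc2, cvc3]
  have eb1 : coefB p (A 1) 1 = 0 := by
    norm_num [hA, u0, u1, u2, fne, coefB, cva0, cva1, cvb0, cvb1, cvb2, cvc0, cvc1, cvc2, cvc3]
  have eb2 : coefB p (A 1) 2 = 0 := by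
    norm_num [hA, u0, u1, u2, fne, coefB, cva0, cva1, cvb0, cvb1, cvb2, cvc0, cvc1, cvc2, cvc3]
  have eb3 : coefB p (A 1) 3 = p 2 := by
    norm_num [hA, u0, u1, u2, fne, coefB, cva0, cva1, cvb0, cvb1, cvb2, cvc0, cvc1, cvc2, cvc3]
  have eg0 : coefB p (A 0) 0 = p 2 := by
    norm_num [hA, u0, u1, u2, fne, coefB, cva0, cva1, cvb0, cvb1, cvb2, cvc0, cvc1, cvc2, cvc3]
  have eg1 : coefB p (A 0) 1 = 0 := by
    norm_num [hA, u0, u1, u2, fne, coefB, cva0, cva1, cvb0, cvb1, cvb2, cvc0, cvc1, cvc2, cvc3]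
  have eg2 : coefB p (A 0) 2 = 0 := by
    norm_num [hA, u0, u1, u2, fne, coefB, cva0, cva1, cvb0, cvb1, cvb2, cvc0, cvc1, cvc2, cvc3]
  have eg3 : coefB p (A 0) 3 = 0 := by
    norm_num [hA, u0, u1, u2, fne, coefB, cva0, cva1, cvb0, cvb1, cvb2, cvc0, cvc1, cvc2, cvc3]
  rw [e1, one_mul] at h0
  have hdisc : Cubic.discr ⟨coefB p (A 1) 3, coefB p (A 1) 2, coefB p (A 1) 1, coefB p (A 1) 0⟩
      = -27 * p 2 ^ 4 := by
    rw [Cubic.discr]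
    simp only [eb0, eb1, eb2, eb3]
    ring
  have hdet : (syl (coefB p (A 1)) (coefB p (A 0))).det = p 2 ^ 6 := by
    have hM : syl (coefB p (A 1)) (coefB p (A 0)) =
        !![p 2, 0, 0, -p 2, 0, 0;
           0, p 2, 0, 0, -p 2, 0;
           0, 0, p 2, 0, 0, -p 2;
           0, 0, 0, p 2, 0, 0;
           0, 0, 0, 0, p 2, 0;
           0, 0, 0, 0, 0, p 2] := by
      rw [syl, eb0, eb1, eb2, eb3, eg0, eg1, eg2, eg3]
    rw [hM, Matrix.det_of_upperTriangular]
    · rw [show ∏ i : Fin 6, (!![p 2, 0, 0, -p 2, 0, 0;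
           0, p 2, 0, 0, -p 2, 0;
           0, 0, p 2, 0, 0, -p 2;
           0, 0, 0, p 2, 0, 0;
           0, 0, 0, 0, p 2, 0;
           0, 0, 0, 0, 0, p 2] : Matrix (Fin 6) (Fin 6) ℂ) i i
          = p 2 * (p 2 * (p 2 * (p 2 * (p 2 * (p 2 * 1))))) from rfl]
      ring
    · intro i j hij
      fin_cases i <;> fin_cases j <;> first
        | rfl
        | exact absurd hij (by decide)
  rw [hdisc, hdet] at h0
  have hne : (-27 : ℂ) * p 2 ^ 4 * p 2 ^ 6 ≠ 0 :=
    mul_ne_zero (mul_ne_zero (by norm_num) (pow_ne_zero _ hp)) (pow_ne_zero _ hp)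
  exact hne h0

lemma card_rootset (b : ℕ → ℂ) (hb3 : b 3 ≠ 0)
    (hdisc : Cubic.discr ⟨b 3, b 2, b 1, b 0⟩ ≠ 0) :
    {lam : ℂ | fev b lam = 0}.ncard = 3 := by
  classical
  set P : Cubic ℂ := ⟨b 3, b 2, b 1, b 0⟩ with hP
  have ha : P.a ≠ 0 := hb3
  have hsp : (P.toPoly.map (RingHom.id ℂ)).Splits := IsAlgClosed.splits _
  obtain ⟨x, y, w, h3⟩ := (Cubic.splits_iff_roots_eq_three ha).mp hsp
  have hmap : Cubic.map (RingHom.id ℂ) P = P := by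
    simp [Cubic.map]
  have hnd : (Cubic.map (RingHom.id ℂ) P).roots.Nodup :=
    (Cubic.discr_ne_zero_iff_roots_nodup ha hsp).mp hdisc
  rw [hmap] at h3 hnd
  have hset : {lam : ℂ | fev b lam = 0} = ↑(P.roots.toFinset) := by
    ext lam
    simp only [Set.mem_setOf_eq, Finset.coe_sort_coe, Multiset.mem_toFinset, Finset.mem_coe]
    rw [Cubic.mem_roots_iff (Cubic.ne_zero_of_a_ne_zero ha)]
    simp [fev, hP]
  rw [hset, Set.ncard_coe_finset, Multiset.toFinset_card_of_nodup hnd, h3]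
  rfl

/-- For a point `p = (a₀ : b₀ : c₀) ∈ ℙ²` with `c₀ ≠ 0` and `u = (1,2,3)`, the distortion
variety `X_{[u]}` is a curve of degree `3` in `ℙ⁸`, contained in a `ℙ³` (i.e. its cone is
contained in a `4`-dimensional linear subspace): a rational normal cubic curve. -/
theorem point_distortion_cubic (p : Fin 3 → ℂ) (hp : p 2 ≠ 0) :
    hasDegree 1 (ptDist p) 3 ∧
    ∃ W : Submodule ℂ (DIdx → ℂ), Module.finrank ℂ W = 4 ∧ ptDist p ⊆ W := by
  constructor
  · refine ⟨Gpoly p, Gpoly_ne_zero p hp, ?_⟩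
    intro α hG
    rw [eval_Gpoly] at hG
    have h12 := mul_ne_zero_iff.mp hG
    have h1 : α 1 ⟨2,3⟩ ≠ 0 := (mul_ne_zero_iff.mp h12.1).1
    have h2 := (mul_ne_zero_iff.mp h12.1).2
    have h3 := h12.2
    set β := coefB p (α 1) with hβ
    set γ := coefB p (α 0) with hγ
    have hb3 : β 3 ≠ 0 := by
      have hh : β 3 = α 1 ⟨2,3⟩ * p 2 := rfl
      rw [hh]; exact mul_ne_zero h1 hp
    have hnc : ∀ lam : ℂ, fev β lam = 0 → fev γ lam ≠ 0 :=
      fun lam hf hg => h3 (syl_det_zero β γ lam hf hg)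
    have hroots := card_rootset β hb3 h2
    have hinj : Set.InjOn (fun lam : ℂ => (fev γ lam)⁻¹ • distMap p lam)
        {lam : ℂ | fev β lam = 0} := by
      intro lam hlam mu hmu heq
      have hgl := hnc lam hlam
      have hgm := hnc mu hmu
      have h20 := congrFun heq ⟨2,0⟩
      have h21 := congrFun heq ⟨2,1⟩
      simp only [Pi.smul_apply, smul_eq_mul, distMap, cvc0, cvc1, pow_zero, pow_one] at h20 h21
      have hg_eq : fev γ lam = fev γ mu := by
        have := mul_right_cancel₀ hp (by linear_combination h20 :
          (fev γ lam)⁻¹ * p 2 = (fev γ mu)⁻¹ * p 2)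
        exact inv_injective this
      rw [hg_eq] at h21
      have h21' : (fev γ mu)⁻¹ * p 2 * lam = (fev γ mu)⁻¹ * p 2 * mu := by
        linear_combination h21
      exact mul_left_cancel₀ (mul_ne_zero (inv_ne_zero hgm) hp) h21'
    have hTset : {z | z ∈ ptDist p ∧ (∑ c, α 0 c * z c) = 1 ∧
          ∀ i : Fin (1 + 1), i ≠ 0 → (∑ c, α i c * z c) = 0}
        = (fun lam : ℂ => (fev γ lam)⁻¹ • distMap p lam) '' {lam : ℂ | fev β lam = 0} := by
      ext z
      constructor
      · rintro ⟨hzmem, hz0, hz1⟩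
        have hz1' := hz1 1 (by decide)
        rcases ptDist_cases p hp hzmem with ⟨t, lam, rfl⟩ | hdeg
        · rw [sum_linear] at hz0 hz1'
          have ht : t ≠ 0 := by
            rintro rfl; rw [zero_mul] at hz0; exact one_ne_zero hz0.symm
          have hfb : fev β lam = 0 := (mul_eq_zero.mp hz1').resolve_left ht
          refine ⟨lam, hfb, ?_⟩
          have ht' : t = (fev γ lam)⁻¹ := eq_inv_of_mul_eq_one_left hz0
          show (fev γ lam)⁻¹ • distMap p lam = t • distMap p lam
          rw [ht']
        · exfalso
          have hsum1 : (∑ c, α 1 c * z c) = α 1 ⟨2,3⟩ * z ⟨2,3⟩ := by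
            rw [sum_DIdx, hdeg ⟨0,0⟩ (by decide), hdeg ⟨0,1⟩ (by decide),
              hdeg ⟨1,0⟩ (by decide), hdeg ⟨1,1⟩ (by decide), hdeg ⟨1,2⟩ (by decide),
              hdeg ⟨2,0⟩ (by decide), hdeg ⟨2,1⟩ (by decide), hdeg ⟨2,2⟩ (by decide)]
            ring
          rw [hsum1] at hz1'
          have h23 : z ⟨2,3⟩ = 0 := (mul_eq_zero.mp hz1').resolve_left h1
          have hz00 : (∑ c, α 0 c * z c) = 0 := by
            rw [sum_DIdx, hdeg ⟨0,0⟩ (by decide), hdeg ⟨0,1⟩ (by decide),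
              hdeg ⟨1,0⟩ (by decide), hdeg ⟨1,1⟩ (by decide), hdeg ⟨1,2⟩ (by decide),
              hdeg ⟨2,0⟩ (by decide), hdeg ⟨2,1⟩ (by decide), hdeg ⟨2,2⟩ (by decide), h23]
            ring
          rw [hz00] at hz0
          exact one_ne_zero hz0.symm
      · rintro ⟨lam, hlam, rfl⟩
        have hfg := hnc lam hlam
        refine ⟨mem_ptDist p _ lam, ?_, ?_⟩
        · rw [sum_linear]
          exact inv_mul_cancel₀ hfg
        · intro i hi
          have hi1 : i = 1 := Fin.eq_one_of_ne_zero i hi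
          subst hi1
          rw [sum_linear, hlam, mul_zero]
    rw [hTset, Set.ncard_image_of_injOn hinj, hroots]
  · -- the linear span
    have hlt4 : ∀ d : DIdx, (d.2 : ℕ) < u123 2 + 1 := by decide
    let g : (Fin (u123 2 + 1) → ℂ) →ₗ[ℂ] (DIdx → ℂ) :=
      { toFun := fun y d => p d.1 / p 2 * y ⟨(d.2 : ℕ), hlt4 d⟩
        map_add' := by intro y1 y2; funext d; simp; ring
        map_smul' := by intro c y; funext d; simp; ring }
    have hginj : Function.Injective g := by
      intro y1 y2 hy
      funext i
      have h := congrFun hy ⟨2, i⟩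
      simp only [g, LinearMap.coe_mk, AddHom.coe_mk, Fin.eta] at h
      have h2 : p 2 / p 2 = 1 := div_self hp
      rw [h2, one_mul, one_mul] at h
      exact h
    refine ⟨LinearMap.range g, ?_, ?_⟩
    · rw [LinearMap.finrank_range_of_inj hginj, Module.finrank_pi]
      rfl
    · intro z hz
      refine ⟨fun i => z ⟨2, i⟩, ?_⟩
      funext d
      have hr := ptDist_rel p hz d ⟨2, ⟨(d.2 : ℕ), hlt4 d⟩⟩ rfl rfl
      simp only [g, LinearMap.coe_mk, AddHom.coe_mk]
      field_simp
      linear_combination -hr
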